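/- Let μ = ζ^n be an n-fold product distribution over columns and Π a protocol on input (X₁,...,X_T) where the j-th coordinates of all players' inputs form the j-th column, with columns drawn independently from ζ. Then I(X₁,...,X_T; Π(X₁,...,X_T)) ≥ Σ_{i=1}^n I(X_{1,i},...,X_{T,i}; Π(X₁,...,X_T)). -/

import Mathlib

open Finset

/-- Probability that the random variable `X` takes the value `a`. -/
noncomputable def prOf {Ω α : Type*} [Fintype Ω] [DecidableEq α]
    (w : Ω → ℝ) (X : Ω → α) (a : α) : ℝ :=
  ∑ ω, if X ω = a then w ω else 0

/-- Shannon entropy (in bits). -/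
noncomputable def entropy {Ω α : Type*} [Fintype Ω] [Fintype α] [DecidableEq α]
    (w : Ω → ℝ) (X : Ω → α) : ℝ :=
  -∑ a, prOf w X a * Real.logb 2 (prOf w X a)

/-- Mutual information `I(X;Y) = H(X) + H(Y) - H(X,Y)`. -/
noncomputable def mutualInfo {Ω α β : Type*} [Fintype Ω] [Fintype α] [Fintype β]
    [DecidableEq α] [DecidableEq β] (w : Ω → ℝ) (X : Ω → α) (Y : Ω → β) : ℝ :=
  entropy w X + entropy w Y - entropy w (fun ω => (X ω, Y ω))

namespace InfoAux

variable {Ω α β : Type*} [Fintype Ω]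

lemma prOf_nonneg [DecidableEq α] (w : Ω → ℝ) (hw0 : ∀ ω, 0 ≤ w ω) (X : Ω → α) (a : α) :
    0 ≤ prOf w X a := by
  refine Finset.sum_nonneg fun ω _ => ?_
  split <;> [exact hw0 ω; exact le_rfl]

lemma prOf_sum [Fintype α] [DecidableEq α] (w : Ω → ℝ) (hw1 : ∑ ω, w ω = 1) (X : Ω → α) :
    ∑ a, prOf w X a = 1 := by
  unfold prOf
  rw [Finset.sum_comm]
  rw [← hw1]
  refine Finset.sum_congr rfl fun ω _ => ?_
  rw [Finset.sum_ite_eq univ (X ω) (fun _ => w ω)]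
  simp

lemma prOf_comp [Fintype α] [DecidableEq α] [DecidableEq β]
    (w : Ω → ℝ) (X : Ω → α) (F : α → β) (b : β) :
    prOf w (fun ω => F (X ω)) b = ∑ a, if F a = b then prOf w X a else 0 := by
  unfold prOf
  have : (∑ a, if F a = b then (∑ ω, if X ω = a then w ω else 0) else 0)
      = ∑ a, ∑ ω, if F a = b then (if X ω = a then w ω else 0) else 0 := by
    refine Finset.sum_congr rfl fun a _ => ?_
    split <;> simp
  rw [this, Finset.sum_comm]
  refine Finset.sum_congr rfl fun ω _ => ?_
  rw [show (∑ a, if F a = b then (if X ω = a then w ω else 0) else 0)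
      = ∑ a, if X ω = a then (if F a = b then w ω else 0) else 0 from
      Finset.sum_congr rfl fun a _ => by by_cases h1 : F a = b <;> by_cases h2 : X ω = a <;> simp [h1, h2]]
  rw [Finset.sum_ite_eq univ (X ω) (fun a => if F a = b then w ω else 0)]
  simp

lemma sum_prOf_comp [Fintype α] [Fintype β] [DecidableEq α] [DecidableEq β]
    (w : Ω → ℝ) (X : Ω → α) (F : α → β) (f : β → ℝ) :
    ∑ b, prOf w (fun ω => F (X ω)) b * f b = ∑ a, prOf w X a * f (F a) := by
  calc ∑ b, prOf w (fun ω => F (X ω)) b * f b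
      = ∑ b, ∑ a, (if F a = b then prOf w X a * f b else 0) := by
        refine Finset.sum_congr rfl fun b _ => ?_
        rw [prOf_comp, Finset.sum_mul]
        exact Finset.sum_congr rfl fun a _ => by split <;> simp
    _ = ∑ a, ∑ b, (if F a = b then prOf w X a * f b else 0) := Finset.sum_comm
    _ = ∑ a, prOf w X a * f (F a) := by
        refine Finset.sum_congr rfl fun a _ => ?_
        rw [Finset.sum_ite_eq univ (F a) (fun b => prOf w X a * f b)]
        simp

lemma prOf_le_comp [Fintype α] [DecidableEq α] [DecidableEq β]
    (w : Ω → ℝ) (hw0 : ∀ ω, 0 ≤ w ω) (X : Ω → α) (F : α → β) (a : α) :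
    prOf w X a ≤ prOf w (fun ω => F (X ω)) (F a) := by
  rw [prOf_comp w X F (F a)]
  have : prOf w X a = (if F a = F a then prOf w X a else 0) := by simp
  nth_rewrite 1 [this]
  refine Finset.single_le_sum (f := fun a' => if F a' = F a then prOf w X a' else 0)
    (fun a' _ => ?_) (mem_univ a)
  split <;> [exact prOf_nonneg w hw0 X a'; exact le_rfl]

/-- Gibbs' inequality (natural log version). -/
lemma gibbs [Fintype α] (p q : α → ℝ) (hp0 : ∀ a, 0 ≤ p a) (hq0 : ∀ a, 0 ≤ q a)
    (hp1 : ∑ a, p a = 1) (hq1 : ∑ a, q a ≤ 1)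
    (hac : ∀ a, 0 < p a → 0 < q a) :
    ∑ a, p a * Real.log (q a) ≤ ∑ a, p a * Real.log (p a) := by
  have key : ∀ a, p a * Real.log (q a) - p a * Real.log (p a) ≤ q a - p a := by
    intro a
    rcases lt_or_eq_of_le (hp0 a) with hpa | hpa
    · have hqa := hac a hpa
      have h1 : Real.log (q a) - Real.log (p a) = Real.log (q a / p a) :=
        (Real.log_div (ne_of_gt hqa) (ne_of_gt hpa)).symm
      have h2 : Real.log (q a / p a) ≤ q a / p a - 1 :=
        Real.log_le_sub_one_of_pos (div_pos hqa hpa)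
      have h3 : p a * (Real.log (q a) - Real.log (p a)) ≤ p a * (q a / p a - 1) := by
        rw [h1]; exact mul_le_mul_of_nonneg_left h2 (le_of_lt hpa)
      have h4 : p a * (q a / p a - 1) = q a - p a := by
        field_simp
      nlinarith
    · rw [← hpa]; simp [hq0 a]
  have : ∑ a, (p a * Real.log (q a) - p a * Real.log (p a)) ≤ ∑ a, (q a - p a) :=
    Finset.sum_le_sum fun a _ => key a
  rw [Finset.sum_sub_distrib, Finset.sum_sub_distrib, hp1] at this
  linarith


/-- Entropy of a product distribution splits as a sum (natural-log sums). -/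
lemma nent_prod {n : ℕ} {β : Type*} [Fintype β] (p : Fin n → β → ℝ)
    (_h0 : ∀ i b, 0 ≤ p i b) (h1 : ∀ i, ∑ b, p i b = 1) :
    ∑ g : Fin n → β, (∏ i, p i (g i)) * Real.log (∏ i, p i (g i))
      = ∑ i, ∑ b, p i b * Real.log (p i b) := by
  have step1 : ∀ g : Fin n → β,
      (∏ i, p i (g i)) * Real.log (∏ i, p i (g i))
        = ∑ j, (∏ i, p i (g i)) * Real.log (p j (g j)) := by
    intro g
    by_cases h : ∀ i ∈ Finset.univ, p i (g i) ≠ 0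
    · rw [Real.log_prod h, Finset.mul_sum]
    · push_neg at h
      obtain ⟨i0, _, hi0⟩ := h
      have hz : (∏ i, p i (g i)) = 0 := Finset.prod_eq_zero (mem_univ i0) hi0
      simp [hz]
  calc ∑ g : Fin n → β, (∏ i, p i (g i)) * Real.log (∏ i, p i (g i))
      = ∑ g : Fin n → β, ∑ j, (∏ i, p i (g i)) * Real.log (p j (g j)) :=
        Finset.sum_congr rfl fun g _ => step1 g
    _ = ∑ j, ∑ g : Fin n → β, (∏ i, p i (g i)) * Real.log (p j (g j)) := Finset.sum_comm
    _ = ∑ j, ∑ b, p j b * Real.log (p j b) := by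
        refine Finset.sum_congr rfl fun j _ => ?_
        set t : Fin n → β → ℝ := fun i b => if i = j then p i b * Real.log (p i b) else p i b with ht
        have e1 : ∀ g : Fin n → β, (∏ i, p i (g i)) * Real.log (p j (g j)) = ∏ i, t i (g i) := by
          intro g
          rw [← Finset.mul_prod_erase univ (fun i => t i (g i)) (mem_univ j),
              ← Finset.mul_prod_erase univ (fun i => p i (g i)) (mem_univ j)]
          have e2 : ∏ i ∈ univ.erase j, t i (g i) = ∏ i ∈ univ.erase j, p i (g i) :=
            Finset.prod_congr rfl fun i hi => by
              simp [ht, (Finset.mem_erase.mp hi).1]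
          rw [e2]
          simp only [ht, if_pos rfl]
          ring
        calc ∑ g : Fin n → β, (∏ i, p i (g i)) * Real.log (p j (g j))
            = ∑ g : Fin n → β, ∏ i, t i (g i) := Finset.sum_congr rfl fun g _ => e1 g
          _ = ∏ i, ∑ b, t i b := by
              rw [Finset.prod_univ_sum (fun _ => univ) t, Fintype.piFinset_univ]
          _ = ∑ b, p j b * Real.log (p j b) := by
              rw [Finset.prod_eq_single j (fun i _ hij => by simp [ht, hij, h1 i]) (by simp)]
              simp [ht]

lemma prOf_equiv [DecidableEq α] [DecidableEq β] (w : Ω → ℝ) (X : Ω → α) (e : α ≃ β) (a : α) :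
    prOf w (fun ω => e (X ω)) (e a) = prOf w X a := by
  unfold prOf
  refine Finset.sum_congr rfl fun ω _ => ?_
  simp [EmbeddingLike.apply_eq_iff_eq]

lemma entropy_equiv [Fintype α] [Fintype β] [DecidableEq α] [DecidableEq β]
    (w : Ω → ℝ) (X : Ω → α) (e : α ≃ β) :
    entropy w (fun ω => e (X ω)) = entropy w X := by
  unfold entropy
  congr 1
  refine (Fintype.sum_equiv e _ _ fun a => ?_).symm
  rw [prOf_equiv]

lemma mutualInfo_equiv {γ : Type*} [Fintype α] [Fintype β] [Fintype γ]
    [DecidableEq α] [DecidableEq β] [DecidableEq γ]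
    (w : Ω → ℝ) (X : Ω → α) (Y : Ω → γ) (e : α ≃ β) :
    mutualInfo w (fun ω => e (X ω)) Y = mutualInfo w X Y := by
  unfold mutualInfo
  rw [entropy_equiv w X e]
  congr 1
  have := entropy_equiv w (fun ω => (X ω, Y ω)) (e.prodCongr (Equiv.refl γ))
  simpa using this


lemma entropy_eq {Ω α : Type*} [Fintype Ω] [Fintype α] [DecidableEq α] (w : Ω → ℝ) (V : Ω → α) :
    entropy w V = -((∑ a, prOf w V a * Real.log (prOf w V a)) / Real.log 2) := by
  unfold entropy
  congr 1
  rw [Finset.sum_div]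
  exact Finset.sum_congr rfl fun a _ => by simp [Real.logb]; ring

/-- The key superadditivity inequality, abstractly. -/
lemma superadd_key {β γ : Type*} [Fintype β] [Fintype γ] {n : ℕ}
    (pZ : (Fin n → β) × γ → ℝ) (pY : γ → ℝ) (q2 : Fin n → β × γ → ℝ)
    (hpZ0 : ∀ z, 0 ≤ pZ z) (hpZ1 : ∑ z, pZ z = 1)
    (hpY0 : ∀ y, 0 ≤ pY y) (hpY1 : ∑ y, pY y = 1)
    (hq20 : ∀ i u, 0 ≤ q2 i u)
    (hdomY : ∀ z, pZ z ≤ pY z.2)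
    (hdom2 : ∀ i z, pZ z ≤ q2 i (z.1 i, z.2))
    (hq2marg : ∀ i y, ∑ b, q2 i (b, y) = pY y)
    (hcolY : ∑ z : (Fin n → β) × γ, pZ z * Real.log (pY z.2)
      = ∑ y, pY y * Real.log (pY y))
    (hcol2 : ∀ i, ∑ z : (Fin n → β) × γ, pZ z * Real.log (q2 i (z.1 i, z.2))
      = ∑ u, q2 i u * Real.log (q2 i u)) :
    (∑ y, pY y * Real.log (pY y))
      + ∑ i, ((∑ u, q2 i u * Real.log (q2 i u)) - ∑ y, pY y * Real.log (pY y))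
      ≤ ∑ z, pZ z * Real.log (pZ z) := by
  classical
  set q : (Fin n → β) × γ → ℝ := fun z => pY z.2 * ∏ i, (q2 i (z.1 i, z.2) / pY z.2) with hqdef
  have hq0 : ∀ z, 0 ≤ q z := fun z =>
    mul_nonneg (hpY0 _) (Finset.prod_nonneg fun i _ => div_nonneg (hq20 i _) (hpY0 _))
  have hq1 : ∑ z, q z = 1 := by
    rw [Fintype.sum_prod_type, Finset.sum_comm]
    have hy : ∀ y, (∑ g : Fin n → β, q (g, y)) = pY y := by
      intro y
      by_cases h : pY y = 0
      · simp [hqdef, h]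
      · have hfub : (∑ g : Fin n → β, ∏ i, (q2 i (g i, y) / pY y))
            = ∏ i : Fin n, ∑ b, (q2 i (b, y) / pY y) := by
          rw [Finset.prod_univ_sum (fun _ => univ) (fun i b => q2 i (b, y) / pY y),
            Fintype.piFinset_univ]
        calc ∑ g : Fin n → β, q (g, y)
            = pY y * ∑ g : Fin n → β, ∏ i, (q2 i (g i, y) / pY y) := by
              rw [Finset.mul_sum]
          _ = pY y * ∏ i : Fin n, ∑ b, (q2 i (b, y) / pY y) := by rw [hfub]
          _ = pY y := by
              have h1 : ∀ i : Fin n, (∑ b, (q2 i (b, y) / pY y)) = 1 := by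
                intro i; rw [← Finset.sum_div, hq2marg i y, div_self h]
              rw [Finset.prod_congr rfl fun i _ => h1 i]
              simp
    rw [Finset.sum_congr rfl fun y _ => hy y, hpY1]
  have hgibbs := gibbs pZ q hpZ0 hq0 hpZ1 (le_of_eq hq1) (fun z hz =>
    mul_pos (lt_of_lt_of_le hz (hdomY z))
      (Finset.prod_pos fun i _ => div_pos (lt_of_lt_of_le hz (hdom2 i z))
        (lt_of_lt_of_le hz (hdomY z))))
  have hexp : ∑ z, pZ z * Real.log (q z)
      = ∑ z, pZ z * (Real.log (pY z.2)
          + ∑ i, (Real.log (q2 i (z.1 i, z.2)) - Real.log (pY z.2))) := by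
    refine Finset.sum_congr rfl fun z _ => ?_
    rcases (hpZ0 z).eq_or_lt with hz | hz
    · rw [← hz]; ring
    · have hY : 0 < pY z.2 := lt_of_lt_of_le hz (hdomY z)
      have h2 : ∀ i, 0 < q2 i (z.1 i, z.2) := fun i => lt_of_lt_of_le hz (hdom2 i z)
      have hfac : ∀ i ∈ (univ : Finset (Fin n)), q2 i (z.1 i, z.2) / pY z.2 ≠ 0 :=
        fun i _ => ne_of_gt (div_pos (h2 i) hY)
      congr 1
      rw [hqdef]
      dsimp only
      rw [Real.log_mul (ne_of_gt hY) (Finset.prod_ne_zero_iff.mpr hfac),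
          Real.log_prod hfac]
      congr 1
      exact Finset.sum_congr rfl fun i _ => Real.log_div (ne_of_gt (h2 i)) (ne_of_gt hY)
  have hsplit : ∑ z, pZ z * (Real.log (pY z.2)
          + ∑ i, (Real.log (q2 i (z.1 i, z.2)) - Real.log (pY z.2)))
      = (∑ y, pY y * Real.log (pY y))
        + ∑ i, ((∑ u, q2 i u * Real.log (q2 i u)) - ∑ y, pY y * Real.log (pY y)) := by
    have e1 : ∀ z : (Fin n → β) × γ,
        pZ z * (Real.log (pY z.2) + ∑ i, (Real.log (q2 i (z.1 i, z.2)) - Real.log (pY z.2)))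
        = pZ z * Real.log (pY z.2)
          + ∑ i, (pZ z * Real.log (q2 i (z.1 i, z.2)) - pZ z * Real.log (pY z.2)) := by
      intro z
      rw [mul_add, Finset.mul_sum]
      congr 1
      exact Finset.sum_congr rfl fun i _ => mul_sub _ _ _
    calc ∑ z, pZ z * (Real.log (pY z.2)
          + ∑ i, (Real.log (q2 i (z.1 i, z.2)) - Real.log (pY z.2)))
        = ∑ z, (pZ z * Real.log (pY z.2)
            + ∑ i, (pZ z * Real.log (q2 i (z.1 i, z.2)) - pZ z * Real.log (pY z.2))) :=
          Finset.sum_congr rfl fun z _ => e1 z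
      _ = (∑ z, pZ z * Real.log (pY z.2))
            + ∑ z, ∑ i, (pZ z * Real.log (q2 i (z.1 i, z.2)) - pZ z * Real.log (pY z.2)) :=
          Finset.sum_add_distrib
      _ = (∑ y, pY y * Real.log (pY y))
            + ∑ i, ∑ z, (pZ z * Real.log (q2 i (z.1 i, z.2)) - pZ z * Real.log (pY z.2)) := by
          rw [hcolY, Finset.sum_comm]
      _ = (∑ y, pY y * Real.log (pY y))
            + ∑ i, ((∑ u, q2 i u * Real.log (q2 i u)) - ∑ y, pY y * Real.log (pY y)) := by
          congr 1
          refine Finset.sum_congr rfl fun i _ => ?_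
          rw [Finset.sum_sub_distrib, hcol2 i, hcolY]
  rw [← hsplit, ← hexp]
  exact hgibbs


lemma main {Ω β γ : Type*} [Fintype Ω] [Fintype β] [Fintype γ]
    [DecidableEq β] [DecidableEq γ] {n : ℕ}
    (w : Ω → ℝ) (hw0 : ∀ ω, 0 ≤ w ω) (hw1 : ∑ ω, w ω = 1)
    (Xc : Ω → (Fin n → β)) (Tr : Ω → γ)
    (hcols : ∀ g, prOf w Xc g = ∏ i, prOf w (fun ω => Xc ω i) (g i)) :
    mutualInfo w Xc Tr ≥ ∑ i, mutualInfo w (fun ω => Xc ω i) Tr := by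
  classical
  have hL : (0:ℝ) < Real.log 2 := Real.log_pos one_lt_two
  -- marginal of each pair (X_i, Tr) over the first coordinate
  have hq2marg : ∀ (i : Fin n) (y : γ),
      ∑ b, prOf w (fun ω => (Xc ω i, Tr ω)) (b, y) = prOf w Tr y := by
    intro i y
    have h2 : prOf w Tr y
        = ∑ u : β × γ, if u.2 = y then prOf w (fun ω => (Xc ω i, Tr ω)) u else 0 :=
      prOf_comp w (fun ω => (Xc ω i, Tr ω)) Prod.snd y
    rw [h2, Fintype.sum_prod_type]
    refine Finset.sum_congr rfl fun b _ => ?_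
    simp
  have hcolY : ∑ z : (Fin n → β) × γ,
        prOf w (fun ω => (Xc ω, Tr ω)) z * Real.log (prOf w Tr z.2)
      = ∑ y, prOf w Tr y * Real.log (prOf w Tr y) :=
    (sum_prOf_comp w (fun ω => (Xc ω, Tr ω)) Prod.snd
      (fun y => Real.log (prOf w Tr y))).symm
  have hcol2 : ∀ i : Fin n, ∑ z : (Fin n → β) × γ,
        prOf w (fun ω => (Xc ω, Tr ω)) z
          * Real.log (prOf w (fun ω => (Xc ω i, Tr ω)) (z.1 i, z.2))
      = ∑ u, prOf w (fun ω => (Xc ω i, Tr ω)) u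
          * Real.log (prOf w (fun ω => (Xc ω i, Tr ω)) u) := fun i =>
    (sum_prOf_comp w (fun ω => (Xc ω, Tr ω)) (fun u => (u.1 i, u.2))
      (fun u => Real.log (prOf w (fun ω => (Xc ω i, Tr ω)) u))).symm
  have hkey := superadd_key (prOf w (fun ω => (Xc ω, Tr ω))) (prOf w Tr)
      (fun i => prOf w (fun ω => (Xc ω i, Tr ω)))
      (prOf_nonneg w hw0 _) (prOf_sum w hw1 _) (prOf_nonneg w hw0 _) (prOf_sum w hw1 _)
      (fun i u => prOf_nonneg w hw0 _ u)
      (fun z => prOf_le_comp w hw0 (fun ω => (Xc ω, Tr ω)) Prod.snd z)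
      (fun i z => prOf_le_comp w hw0 (fun ω => (Xc ω, Tr ω)) (fun u => (u.1 i, u.2)) z)
      hq2marg hcolY hcol2
  have hSX : ∑ g, prOf w Xc g * Real.log (prOf w Xc g)
      = ∑ i, ∑ b, prOf w (fun ω => Xc ω i) b * Real.log (prOf w (fun ω => Xc ω i) b) := by
    calc ∑ g, prOf w Xc g * Real.log (prOf w Xc g)
        = ∑ g : Fin n → β, (∏ i, prOf w (fun ω => Xc ω i) (g i))
            * Real.log (∏ i, prOf w (fun ω => Xc ω i) (g i)) :=
          Finset.sum_congr rfl fun g _ => by rw [hcols g]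
      _ = _ := nent_prod _ (fun i b => prOf_nonneg w hw0 _ b) (fun i => prOf_sum w hw1 _)
  have hMIX : mutualInfo w Xc Tr
      = ((∑ z : (Fin n → β) × γ, prOf w (fun ω => (Xc ω, Tr ω)) z
            * Real.log (prOf w (fun ω => (Xc ω, Tr ω)) z))
          - (∑ g, prOf w Xc g * Real.log (prOf w Xc g))
          - (∑ y, prOf w Tr y * Real.log (prOf w Tr y))) / Real.log 2 := by
    rw [mutualInfo, entropy_eq, entropy_eq, entropy_eq]
    ring
  have hMIc : ∀ i : Fin n, mutualInfo w (fun ω => Xc ω i) Tr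
      = ((∑ u, prOf w (fun ω => (Xc ω i, Tr ω)) u
            * Real.log (prOf w (fun ω => (Xc ω i, Tr ω)) u))
          - (∑ b, prOf w (fun ω => Xc ω i) b * Real.log (prOf w (fun ω => Xc ω i) b))
          - (∑ y, prOf w Tr y * Real.log (prOf w Tr y))) / Real.log 2 := by
    intro i
    rw [mutualInfo, entropy_eq, entropy_eq, entropy_eq]
    ring
  rw [ge_iff_le, hMIX]
  have hsum : ∑ i, mutualInfo w (fun ω => Xc ω i) Tr
      = (∑ i : Fin n, ((∑ u, prOf w (fun ω => (Xc ω i, Tr ω)) u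
            * Real.log (prOf w (fun ω => (Xc ω i, Tr ω)) u))
          - (∑ b, prOf w (fun ω => Xc ω i) b * Real.log (prOf w (fun ω => Xc ω i) b))
          - (∑ y, prOf w Tr y * Real.log (prOf w Tr y)))) / Real.log 2 := by
    rw [Finset.sum_div]
    exact Finset.sum_congr rfl fun i _ => hMIc i
  rw [hsum, div_le_div_iff_of_pos_right hL]
  have hre : ∑ i : Fin n, ((∑ u, prOf w (fun ω => (Xc ω i, Tr ω)) u
            * Real.log (prOf w (fun ω => (Xc ω i, Tr ω)) u))
          - (∑ b, prOf w (fun ω => Xc ω i) b * Real.log (prOf w (fun ω => Xc ω i) b))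
          - (∑ y, prOf w Tr y * Real.log (prOf w Tr y)))
      = (∑ i : Fin n, ((∑ u, prOf w (fun ω => (Xc ω i, Tr ω)) u
            * Real.log (prOf w (fun ω => (Xc ω i, Tr ω)) u))
          - (∑ y, prOf w Tr y * Real.log (prOf w Tr y))))
        - ∑ i, ∑ b, prOf w (fun ω => Xc ω i) b * Real.log (prOf w (fun ω => Xc ω i) b) := by
    rw [← Finset.sum_sub_distrib]
    exact Finset.sum_congr rfl fun i _ => by ring
  linarith [hkey, hSX, hre]

end InfoAux

/-- Information cost decomposition (Bar-Yossef–Jayram–Kumar–Sivakumar): if the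
inputs `X t ∈ {0,1}^n` of the `T` players have mutually independent columns (the
joint distribution of the `n` columns is the product of the column marginals, as for
`μ = ζ^n`), then for any transcript `Π`,
`I(X₁,…,X_T; Π) ≥ Σ_{i=1}^n I(X_{1,i},…,X_{T,i}; Π)`. -/


theorem info_cost_decomposition
    {Ω γ : Type*} [Fintype Ω] [Fintype γ] [DecidableEq γ] (T n : ℕ)
    (w : Ω → ℝ) (hw0 : ∀ ω, 0 ≤ w ω) (hw1 : ∑ ω, w ω = 1)
    (X : Fin T → Ω → (Fin n → Bool)) (Tr : Ω → γ)
    (hcols : ∀ g : Fin n → (Fin T → Bool),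
      prOf w (fun ω => fun i : Fin n => fun t : Fin T => X t ω i) g
        = ∏ i : Fin n, prOf w (fun ω => fun t : Fin T => X t ω i) (g i)) :
    mutualInfo w (fun ω => fun t : Fin T => X t ω) Tr ≥
      ∑ i : Fin n, mutualInfo w (fun ω => fun t : Fin T => X t ω i) Tr := by
  classical
  have hfun : (fun ω => (Equiv.piComm fun (_ : Fin n) (_ : Fin T) => Bool)
        (fun i : Fin n => fun t : Fin T => X t ω i))
      = (fun ω => fun t : Fin T => X t ω) := by
    funext ω
    rfl
  have h1 : mutualInfo w (fun ω => fun t : Fin T => X t ω) Tr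
      = mutualInfo w (fun ω => fun i : Fin n => fun t : Fin T => X t ω i) Tr := by
    rw [← hfun]
    exact InfoAux.mutualInfo_equiv w (fun ω => fun i : Fin n => fun t : Fin T => X t ω i) Tr
      (Equiv.piComm fun (_ : Fin n) (_ : Fin T) => Bool)
  rw [h1]
  exact InfoAux.main w hw0 hw1 (fun ω => fun i : Fin n => fun t : Fin T => X t ω i) Tr hcols
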